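/- Suppose the nodes ξ_1,…,ξ_n are pairwise distinct and a_{i,l_i−1} ≠ 0 for all i, and set C₁ = ‖U(ξ_1,l_1+1,…,ξ_n,l_n+1)^{−1}‖_∞. Then for every ε > 0, every vector v ∈ ℂ^R with |v_k| ≤ ε for all k, every i = 1,…,n and every 1 ≤ j ≤ l_i−1, the component of J_P(x)^{−1} v corresponding to the magnitude a_{i,j} satisfies |[J_P(x)^{−1} v]_{a_{i,j}}| ≤ C₁ ε (1 + |a_{i,j−1}| / |a_{i,l_i−1}|). -/

import Mathlib

open scoped BigOperators

noncomputable section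

/-- Offset of the `i`-th block of columns: the sum of the multiplicities of all previous blocks. -/
def blockOff {n : ℕ} (L : Fin n → ℕ) (i : Fin n) : ℕ := ∑ i' ∈ Finset.Iio i, L i'

theorem blockOff_add_lt {n : ℕ} (L : Fin n → ℕ) (i : Fin n) {j : ℕ} (hj : j < L i) :
    blockOff L i + j < ∑ i', L i' := by
  have h1 : ∑ i' ∈ insert i (Finset.Iio i), L i' = ∑ i' ∈ Finset.Iio i, L i' + L i := by
    rw [Finset.sum_insert (by simp)]; ring
  have h2 : ∑ i' ∈ insert i (Finset.Iio i), L i' ≤ ∑ i', L i' :=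
    Finset.sum_le_sum_of_subset (Finset.subset_univ _)
  unfold blockOff
  omega

/-- The flattened index of position `j` inside block `i`, when block `i` has size `L i`. -/
def encC {n : ℕ} (L : Fin n → ℕ) (i : Fin n) (j : Fin (L i)) : Fin (∑ i', L i') :=
  ⟨blockOff L i + j, blockOff_add_lt L i j.isLt⟩

/-- The (square) confluent Vandermonde matrix on nodes `ξ_i` with multiplicities `L i`:
rows are indexed by `k = 0,…,(∑ L i)−1`; the entry in row `k` and column `j` of block `i`
is `(k)_j ξ_i^{k−j}` (zero when `j > k`). -/
def confVand {n : ℕ} (L : Fin n → ℕ) (ξ : Fin n → ℂ) :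
    Matrix (Fin (∑ i, L i)) (Fin (∑ i, L i)) ℂ :=
  fun k c => ∑ i, ∑ j : Fin (L i),
    if c = encC L i j then ((k : ℕ).descFactorial j : ℂ) * ξ i ^ ((k : ℕ) - (j : ℕ)) else 0

/-- The index (in the parameter vector) of the magnitude `a_{i,j}` (`j < l i`) or,
for `j = l i`, of the node `ξ_i`; the parameters are ordered
`(a_{1,0},…,a_{1,l_1−1}, ξ_1, …, a_{n,0},…,a_{n,l_n−1}, ξ_n)`. -/
def encP {n : ℕ} (l : Fin n → ℕ) (i : Fin n) (j : Fin (l i + 1)) :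
    Fin (∑ i', (l i' + 1)) :=
  encC (fun i' => l i' + 1) i j

/-- The parameter vector `x = (a_{1,0},…,a_{1,l_1−1}, ξ_1, …, a_{n,0},…,a_{n,l_n−1}, ξ_n)`. -/
def pronyParam {n : ℕ} (l : Fin n → ℕ) (ξ : Fin n → ℂ)
    (a : (i : Fin n) → Fin (l i) → ℂ) : Fin (∑ i', (l i' + 1)) → ℂ :=
  fun p => ∑ i, ∑ j : Fin (l i + 1),
    if p = encP l i j then (if h : (j : ℕ) < l i then a i ⟨j, h⟩ else ξ i) else 0

/-- The Prony map `P : ℂ^R → ℂ^R` sending the parameter vector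
`x = (a_{1,0},…,a_{1,l_1−1}, ξ_1, …, a_{n,0},…,a_{n,l_n−1}, ξ_n)` to the moment vector
`(m_0,…,m_{R−1})`, `m_k = Σ_i Σ_{j<l_i} a_{i,j} (k)_j ξ_i^{k−j}`. -/
def pronyMap {n : ℕ} (l : Fin n → ℕ) (x : Fin (∑ i', (l i' + 1)) → ℂ) :
    Fin (∑ i', (l i' + 1)) → ℂ :=
  fun k => ∑ i, ∑ j : Fin (l i),
    x (encP l i (Fin.castSucc j)) * ((k : ℕ).descFactorial j : ℂ) *
      (x (encP l i (Fin.last (l i)))) ^ ((k : ℕ) - (j : ℕ))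

/-- The Jacobian matrix of the Prony map at `x`: the `(k,p)` entry is the partial
derivative of the `k`-th moment with respect to the `p`-th parameter. -/
def pronyJacobian {n : ℕ} (l : Fin n → ℕ) (x : Fin (∑ i', (l i' + 1)) → ℂ) :
    Matrix (Fin (∑ i', (l i' + 1))) (Fin (∑ i', (l i' + 1))) ℂ :=
  fun k p => deriv (fun t : ℂ => pronyMap l (Function.update x p t) k) (x p)

-- new material
lemma blockOff_mono {n : ℕ} (L : Fin n → ℕ) {i i' : Fin n} (h : i < i') :
    blockOff L i + L i ≤ blockOff L i' := by
  have h1 : ∑ i'' ∈ insert i (Finset.Iio i), L i'' = blockOff L i + L i := by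
    rw [Finset.sum_insert (by simp)]; unfold blockOff; ring
  have h2 : insert i (Finset.Iio i) ⊆ Finset.Iio i' := by
    intro x hx
    simp only [Finset.mem_insert, Finset.mem_Iio] at hx ⊢
    rcases hx with rfl | hx
    · exact h
    · exact hx.trans h
  calc blockOff L i + L i = ∑ i'' ∈ insert i (Finset.Iio i), L i'' := h1.symm
    _ ≤ blockOff L i' := Finset.sum_le_sum_of_subset h2

lemma encC_inj {n : ℕ} {L : Fin n → ℕ} {i i' : Fin n} {j : Fin (L i)} {j' : Fin (L i')}
    (h : encC L i j = encC L i' j') : i = i' ∧ (j : ℕ) = (j' : ℕ) := by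
  have hv : blockOff L i + (j : ℕ) = blockOff L i' + (j' : ℕ) := congrArg Fin.val h
  have hii : i = i' := by
    by_contra hne
    rcases lt_or_gt_of_ne hne with hlt | hlt
    · have := blockOff_mono L hlt
      have := j.isLt
      omega
    · have := blockOff_mono L hlt
      have := j'.isLt
      omega
  subst hii
  exact ⟨rfl, by omega⟩

def encS {n : ℕ} (L : Fin n → ℕ) : (Σ i : Fin n, Fin (L i)) → Fin (∑ i', L i') :=
  fun s => encC L s.1 s.2

lemma encS_injective {n : ℕ} (L : Fin n → ℕ) : Function.Injective (encS L) := by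
  rintro ⟨i, j⟩ ⟨i', j'⟩ h
  obtain ⟨hi, hj⟩ := encC_inj h
  subst hi
  simpa [Fin.ext_iff] using hj

def encEquiv {n : ℕ} (L : Fin n → ℕ) : (Σ i : Fin n, Fin (L i)) ≃ Fin (∑ i', L i') :=
  Equiv.ofBijective (encS L)
    ((Fintype.bijective_iff_injective_and_card _).mpr ⟨encS_injective L, by simp⟩)

@[simp] lemma encEquiv_apply {n : ℕ} (L : Fin n → ℕ) (i : Fin n) (j : Fin (L i)) :
    encEquiv L ⟨i, j⟩ = encC L i j := rfl

@[simp] lemma encEquiv_symm_encC {n : ℕ} (L : Fin n → ℕ) (i : Fin n) (j : Fin (L i)) :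
    (encEquiv L).symm (encC L i j) = ⟨i, j⟩ := by
  rw [Equiv.symm_apply_eq]; rfl

/-- collapse a double sum of `ite`s over an injective block-indexed family -/
lemma sum_ite_block {n m : ℕ} {L : Fin n → ℕ} {α : Type*} [AddCommMonoid α]
    (F : (i : Fin n) → Fin (L i) → Fin m)
    (hF : ∀ i i' (j : Fin (L i)) (j' : Fin (L i')), F i j = F i' j' → i = i' ∧ (j : ℕ) = (j' : ℕ))
    (i₀ : Fin n) (j₀ : Fin (L i₀)) (g : (i : Fin n) → Fin (L i) → α) :
    (∑ i, ∑ j : Fin (L i), if F i₀ j₀ = F i j then g i j else 0) = g i₀ j₀ := by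
  rw [Finset.sum_sigma']
  rw [Finset.sum_eq_single (⟨i₀, j₀⟩ : Σ i, Fin (L i))]
  · simp
  · rintro ⟨i, j⟩ _ hne
    rw [if_neg]
    intro h
    obtain ⟨hi, hj⟩ := hF _ _ _ _ h.symm
    subst hi
    exact hne (by simp [Fin.ext_iff, ← hj])
  · simp

lemma encP_inj {n : ℕ} {l : Fin n → ℕ} {i i' : Fin n} {j : Fin (l i + 1)} {j' : Fin (l i' + 1)}
    (h : encP l i j = encP l i' j') : i = i' ∧ (j : ℕ) = (j' : ℕ) := encC_inj h

lemma confVand_apply {n : ℕ} (L : Fin n → ℕ) (ξ : Fin n → ℂ) (k : Fin (∑ i, L i))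
    (i₀ : Fin n) (j₀ : Fin (L i₀)) :
    confVand L ξ k (encC L i₀ j₀) =
      ((k : ℕ).descFactorial j₀ : ℂ) * ξ i₀ ^ ((k : ℕ) - (j₀ : ℕ)) := by
  unfold confVand
  exact sum_ite_block (encC L) (fun _ _ _ _ h => encC_inj h) i₀ j₀ _

lemma pronyParam_mag {n : ℕ} (l : Fin n → ℕ) (ξ : Fin n → ℂ)
    (a : (i : Fin n) → Fin (l i) → ℂ) (i : Fin n) (j : Fin (l i)) :
    pronyParam l ξ a (encP l i (Fin.castSucc j)) = a i j := by
  unfold pronyParam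
  rw [sum_ite_block (encP l) (fun _ _ _ _ h => encP_inj h) i (Fin.castSucc j)]
  simp

lemma pronyParam_node {n : ℕ} (l : Fin n → ℕ) (ξ : Fin n → ℂ)
    (a : (i : Fin n) → Fin (l i) → ℂ) (i : Fin n) :
    pronyParam l ξ a (encP l i (Fin.last (l i))) = ξ i := by
  unfold pronyParam
  rw [sum_ite_block (encP l) (fun _ _ _ _ h => encP_inj h) i (Fin.last (l i))]
  simp

lemma pronyJacobian_mag {n : ℕ} (l : Fin n → ℕ) (x : Fin (∑ i', (l i' + 1)) → ℂ)
    (k : Fin (∑ i', (l i' + 1))) (i₀ : Fin n) (j₀ : Fin (l i₀)) :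
    pronyJacobian l x k (encP l i₀ (Fin.castSucc j₀)) =
      ((k : ℕ).descFactorial j₀ : ℂ) *
        (x (encP l i₀ (Fin.last (l i₀)))) ^ ((k : ℕ) - (j₀ : ℕ)) := by
  set p := encP l i₀ (Fin.castSucc j₀) with hp
  have hnode : ∀ i : Fin n, encP l i (Fin.last (l i)) ≠ p := by
    intro i h
    obtain ⟨hi, hj⟩ := encP_inj h
    subst hi
    simp at hj
    omega
  have key : HasDerivAt (fun t : ℂ => pronyMap l (Function.update x p t) k)
      (∑ i, ∑ j : Fin (l i),
        if p = encP l i (Fin.castSucc j) then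
          ((k : ℕ).descFactorial j : ℂ) * (x (encP l i (Fin.last (l i)))) ^ ((k : ℕ) - (j : ℕ))
        else 0) (x p) := by
    unfold pronyMap
    apply HasDerivAt.fun_sum
    intro i _
    apply HasDerivAt.fun_sum
    intro j _
    simp only [Function.update_of_ne (hnode i)]
    by_cases h : p = encP l i (Fin.castSucc j)
    · rw [if_pos h]
      have : (fun t : ℂ => Function.update x p t (encP l i (Fin.castSucc j)) *
          ((k : ℕ).descFactorial j : ℂ) * (x (encP l i (Fin.last (l i)))) ^ ((k : ℕ) - (j : ℕ)))
          = fun t : ℂ => t * (((k : ℕ).descFactorial j : ℂ) *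
            (x (encP l i (Fin.last (l i)))) ^ ((k : ℕ) - (j : ℕ))) := by
        funext t
        rw [← h, Function.update_self]
        ring
      rw [this]
      simpa using (hasDerivAt_id (x p)).mul_const
        (((k : ℕ).descFactorial j : ℂ) * (x (encP l i (Fin.last (l i)))) ^ ((k : ℕ) - (j : ℕ)))
    · rw [if_neg h]
      have : (fun t : ℂ => Function.update x p t (encP l i (Fin.castSucc j)) *
          ((k : ℕ).descFactorial j : ℂ) * (x (encP l i (Fin.last (l i)))) ^ ((k : ℕ) - (j : ℕ)))
          = fun _ : ℂ => x (encP l i (Fin.castSucc j)) *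
            ((k : ℕ).descFactorial j : ℂ) * (x (encP l i (Fin.last (l i)))) ^ ((k : ℕ) - (j : ℕ)) := by
        funext t
        rw [Function.update_of_ne (fun hh => h hh.symm)]
      rw [this]
      exact hasDerivAt_const _ _
  have := key.deriv
  unfold pronyJacobian
  rw [this, hp]
  exact sum_ite_block (fun i j => encP l i (Fin.castSucc j))
    (fun i i' j j' h => by
      obtain ⟨hi, hj⟩ := encP_inj h
      exact ⟨hi, by simpa using hj⟩) i₀ j₀ _

lemma pronyJacobian_node {n : ℕ} (l : Fin n → ℕ) (x : Fin (∑ i', (l i' + 1)) → ℂ)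
    (k : Fin (∑ i', (l i' + 1))) (i₀ : Fin n) :
    pronyJacobian l x k (encP l i₀ (Fin.last (l i₀))) =
      ∑ j : Fin (l i₀), x (encP l i₀ (Fin.castSucc j)) *
        ((k : ℕ).descFactorial ((j : ℕ) + 1) : ℂ) *
        (x (encP l i₀ (Fin.last (l i₀)))) ^ ((k : ℕ) - ((j : ℕ) + 1)) := by
  set p := encP l i₀ (Fin.last (l i₀)) with hp
  have hmag : ∀ (i : Fin n) (j : Fin (l i)), encP l i (Fin.castSucc j) ≠ p := by
    intro i j h
    obtain ⟨hi, hj⟩ := encP_inj h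
    subst hi
    simp at hj
    omega
  have hnode : ∀ i : Fin n, encP l i (Fin.last (l i)) = p ↔ i = i₀ := by
    intro i
    constructor
    · intro h
      exact (encP_inj h).1
    · rintro rfl; rfl
  have key : HasDerivAt (fun t : ℂ => pronyMap l (Function.update x p t) k)
      (∑ i, ∑ j : Fin (l i),
        if i = i₀ then
          x (encP l i (Fin.castSucc j)) * ((k : ℕ).descFactorial j : ℂ) *
            (((k : ℕ) - (j : ℕ) : ℕ) * (x p) ^ ((k : ℕ) - (j : ℕ) - 1))
        else 0) (x p) := by
    unfold pronyMap
    apply HasDerivAt.fun_sum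
    intro i _
    apply HasDerivAt.fun_sum
    intro j _
    simp only [Function.update_of_ne (hmag i j)]
    by_cases h : i = i₀
    · subst h
      rw [if_pos rfl]
      have : (fun t : ℂ => x (encP l i (Fin.castSucc j)) * ((k : ℕ).descFactorial j : ℂ) *
          Function.update x p t (encP l i (Fin.last (l i))) ^ ((k : ℕ) - (j : ℕ)))
          = fun t : ℂ => x (encP l i (Fin.castSucc j)) * ((k : ℕ).descFactorial j : ℂ) *
            t ^ ((k : ℕ) - (j : ℕ)) := by
        funext t
        rw [show encP l i (Fin.last (l i)) = p from rfl, Function.update_self]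
      rw [this]
      exact (hasDerivAt_pow ((k : ℕ) - (j : ℕ)) (x p)).const_mul _
    · rw [if_neg h]
      have : (fun t : ℂ => x (encP l i (Fin.castSucc j)) * ((k : ℕ).descFactorial j : ℂ) *
          Function.update x p t (encP l i (Fin.last (l i))) ^ ((k : ℕ) - (j : ℕ)))
          = fun _ : ℂ => x (encP l i (Fin.castSucc j)) * ((k : ℕ).descFactorial j : ℂ) *
            (x (encP l i (Fin.last (l i)))) ^ ((k : ℕ) - (j : ℕ)) := by
        funext t
        rw [Function.update_of_ne]
        intro hh
        exact h ((hnode i).mp hh)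
      rw [this]
      exact hasDerivAt_const _ _
  have hd := key.deriv
  unfold pronyJacobian
  rw [hd]
  rw [Finset.sum_eq_single i₀]
  · apply Finset.sum_congr rfl
    intro j _
    rw [if_pos rfl]
    have hdesc : ((k : ℕ).descFactorial ((j : ℕ) + 1) : ℂ) =
        (((k : ℕ) - (j : ℕ) : ℕ) : ℂ) * ((k : ℕ).descFactorial (j : ℕ) : ℂ) := by
      rw [Nat.descFactorial_succ]
      push_cast
      ring
    rw [hdesc]
    have hexp : (k : ℕ) - ((j : ℕ) + 1) = (k : ℕ) - (j : ℕ) - 1 := by omega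
    rw [hexp]
    ring
  · intro i _ hne
    simp [hne]
  · simp

/-- total version of the magnitudes, indexed by naturals (0 outside range) -/
def aN {n : ℕ} (l : Fin n → ℕ) (a : (i : Fin n) → Fin (l i) → ℂ) (i : Fin n) (j : ℕ) : ℂ :=
  if h : j < l i then a i ⟨j, h⟩ else 0

def tentry {n : ℕ} (l : Fin n → ℕ) (a : (i : Fin n) → Fin (l i) → ℂ) (i : Fin n)
    (j j' : ℕ) : ℂ :=
  if j' = l i then (if 1 ≤ j then aN l a i (j - 1) else 0)
  else if j = j' then 1 else 0

def sentry {n : ℕ} (l : Fin n → ℕ) (a : (i : Fin n) → Fin (l i) → ℂ) (i : Fin n)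
    (j j' : ℕ) : ℂ :=
  if j' = l i then
    (if j = l i then (aN l a i (l i - 1))⁻¹
     else if 1 ≤ j then -(aN l a i (j - 1)) * (aN l a i (l i - 1))⁻¹ else 0)
  else if j = j' then 1 else 0

def Tmat {n : ℕ} (l : Fin n → ℕ) (a : (i : Fin n) → Fin (l i) → ℂ) :
    Matrix (Fin (∑ i', (l i' + 1))) (Fin (∑ i', (l i' + 1))) ℂ := fun p q =>
  if ((encEquiv (fun i' => l i' + 1)).symm p).1 = ((encEquiv (fun i' => l i' + 1)).symm q).1 then
    tentry l a ((encEquiv (fun i' => l i' + 1)).symm p).1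
      (((encEquiv (fun i' => l i' + 1)).symm p).2 : ℕ)
      (((encEquiv (fun i' => l i' + 1)).symm q).2 : ℕ)
  else 0

def Smat {n : ℕ} (l : Fin n → ℕ) (a : (i : Fin n) → Fin (l i) → ℂ) :
    Matrix (Fin (∑ i', (l i' + 1))) (Fin (∑ i', (l i' + 1))) ℂ := fun p q =>
  if ((encEquiv (fun i' => l i' + 1)).symm p).1 = ((encEquiv (fun i' => l i' + 1)).symm q).1 then
    sentry l a ((encEquiv (fun i' => l i' + 1)).symm p).1
      (((encEquiv (fun i' => l i' + 1)).symm p).2 : ℕ)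
      (((encEquiv (fun i' => l i' + 1)).symm q).2 : ℕ)
  else 0

lemma Tmat_apply {n : ℕ} (l : Fin n → ℕ) (a : (i : Fin n) → Fin (l i) → ℂ)
    (i i' : Fin n) (j : Fin (l i + 1)) (j' : Fin (l i' + 1)) :
    Tmat l a (encP l i j) (encP l i' j') =
      if i = i' then tentry l a i (j : ℕ) (j' : ℕ) else 0 := by
  unfold Tmat
  have e1 : encP l i j = encC (fun i' => l i' + 1) i j := rfl
  have e2 : encP l i' j' = encC (fun i' => l i' + 1) i' j' := rfl
  rw [e1, e2, encEquiv_symm_encC, encEquiv_symm_encC]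

lemma Smat_apply {n : ℕ} (l : Fin n → ℕ) (a : (i : Fin n) → Fin (l i) → ℂ)
    (i i' : Fin n) (j : Fin (l i + 1)) (j' : Fin (l i' + 1)) :
    Smat l a (encP l i j) (encP l i' j') =
      if i = i' then sentry l a i (j : ℕ) (j' : ℕ) else 0 := by
  unfold Smat
  have e1 : encP l i j = encC (fun i' => l i' + 1) i j := rfl
  have e2 : encP l i' j' = encC (fun i' => l i' + 1) i' j' := rfl
  rw [e1, e2, encEquiv_symm_encC, encEquiv_symm_encC]

lemma sum_fin_blocks {n : ℕ} {L : Fin n → ℕ} {M : Type*} [AddCommMonoid M]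
    (f : Fin (∑ i', L i') → M) :
    ∑ r, f r = ∑ i, ∑ j : Fin (L i), f (encC L i j) := by
  rw [← Equiv.sum_comp (encEquiv L) f]
  rw [← Finset.univ_sigma_univ, Finset.sum_sigma]
  rfl

lemma block_identity {n : ℕ} (l : Fin n → ℕ) (a : (i : Fin n) → Fin (l i) → ℂ)
    (i : Fin n) (hli : 1 ≤ l i) (hhi : aN l a i (l i - 1) ≠ 0)
    (j j' : Fin (l i + 1)) :
    ∑ j'' : Fin (l i + 1), tentry l a i (j : ℕ) (j'' : ℕ) * sentry l a i (j'' : ℕ) (j' : ℕ) =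
      if (j : ℕ) = (j' : ℕ) then 1 else 0 := by
  by_cases hj : (j : ℕ) = l i
  · rw [Finset.sum_eq_single (Fin.last (l i))]
    · simp only [Fin.val_last]
      unfold tentry sentry
      rw [hj]
      have hj'2 := j'.isLt
      split_ifs <;> first | rfl | (exfalso; omega) | (field_simp; done) | simp
    · intro j'' _ hne
      have hne' : (j'' : ℕ) ≠ l i := fun h => hne (Fin.ext (by simp [h]))
      unfold tentry
      rw [if_neg hne', if_neg (by omega : ¬ (j : ℕ) = (j'' : ℕ)), zero_mul]
    · simp
  · have hjlt : (j : ℕ) < l i := by have := j.isLt; omega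
    have hne : j ≠ Fin.last (l i) := fun h => hj (by rw [h]; simp)
    have hzero : ∀ j'' : Fin (l i + 1), j'' ∈ Finset.univ →
        j'' ∉ ({j, Fin.last (l i)} : Finset (Fin (l i + 1))) →
        tentry l a i (j : ℕ) (j'' : ℕ) * sentry l a i (j'' : ℕ) (j' : ℕ) = 0 := by
      intro j'' _ hmem
      simp only [Finset.mem_insert, Finset.mem_singleton, not_or] at hmem
      have h1 : (j'' : ℕ) ≠ l i := fun h => hmem.2 (Fin.ext (by simp [h]))
      have h2 : (j : ℕ) ≠ (j'' : ℕ) := fun h => hmem.1 (Fin.ext h.symm)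
      unfold tentry
      rw [if_neg h1, if_neg h2, zero_mul]
    rw [← Finset.sum_subset (Finset.subset_univ ({j, Fin.last (l i)} : Finset (Fin (l i + 1))))
        hzero, Finset.sum_pair hne]
    simp only [Fin.val_last]
    unfold tentry sentry
    have hj'2 := j'.isLt
    split_ifs <;> first | rfl | (exfalso; omega) | ring_nf | field_simp

lemma Tmat_mul_Smat {n : ℕ} (l : Fin n → ℕ) (a : (i : Fin n) → Fin (l i) → ℂ)
    (hl : ∀ i, 1 ≤ l i) (hhi : ∀ i, aN l a i (l i - 1) ≠ 0) :
    Tmat l a * Smat l a = 1 := by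
  ext p q
  obtain ⟨⟨i₀, j₀⟩, rfl⟩ := (encEquiv (fun i' => l i' + 1)).surjective p
  obtain ⟨⟨i₁, j₁⟩, rfl⟩ := (encEquiv (fun i' => l i' + 1)).surjective q
  have he : ∀ (i : Fin n) (j : Fin (l i + 1)),
      encEquiv (fun i' => l i' + 1) ⟨i, j⟩ = encP l i j := fun _ _ => rfl
  rw [he, he, Matrix.mul_apply]
  rw [sum_fin_blocks (L := fun i' => l i' + 1)
    (fun r => Tmat l a (encP l i₀ j₀) r * Smat l a r (encP l i₁ j₁))]
  have hterm : ∀ (i : Fin n) (j : Fin (l i + 1)),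
      Tmat l a (encP l i₀ j₀) (encC (fun i' => l i' + 1) i j) *
        Smat l a (encC (fun i' => l i' + 1) i j) (encP l i₁ j₁) =
        (if i₀ = i then tentry l a i₀ (j₀ : ℕ) (j : ℕ) else 0) *
        (if i = i₁ then sentry l a i (j : ℕ) (j₁ : ℕ) else 0) := by
    intro i j
    rw [show encC (fun i' => l i' + 1) i j = encP l i j from rfl, Tmat_apply, Smat_apply]
  simp only [hterm]
  rw [Finset.sum_eq_single i₀]
  · by_cases hii : i₀ = i₁
    · subst hii
      simp only [if_pos rfl, if_true]
      rw [block_identity l a i₀ (hl i₀) (hhi i₀) j₀ j₁]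
      by_cases hjj : (j₀ : ℕ) = (j₁ : ℕ)
      · have hjf : j₀ = j₁ := Fin.ext hjj
        subst hjf
        rw [if_pos rfl, Matrix.one_apply_eq]
      · have hne2 : encP l i₀ j₀ ≠ encP l i₀ j₁ := fun h => hjj (encP_inj h).2
        rw [if_neg hjj, Matrix.one_apply_ne hne2]
    · simp only [if_neg hii, mul_zero, Finset.sum_const_zero]
      rw [Matrix.one_apply_ne]
      intro h
      exact hii (encP_inj h).1
  · intro i _ hne
    simp [Ne.symm hne]
  · simp

lemma jacobian_factor {n : ℕ} (l : Fin n → ℕ) (ξ : Fin n → ℂ)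
    (a : (i : Fin n) → Fin (l i) → ℂ) :
    pronyJacobian l (pronyParam l ξ a) = confVand (fun i' => l i' + 1) ξ * Tmat l a := by
  ext k q
  obtain ⟨⟨i₁, j₁⟩, rfl⟩ := (encEquiv (fun i' => l i' + 1)).surjective q
  have he : (encEquiv fun i' => l i' + 1) (⟨i₁, j₁⟩ : Σ i, Fin (l i + 1)) = encP l i₁ j₁ := rfl
  rw [he, Matrix.mul_apply]
  rw [sum_fin_blocks (L := fun i' => l i' + 1)
    (fun r => confVand (fun i' => l i' + 1) ξ k r * Tmat l a r (encP l i₁ j₁))]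
  have hterm : ∀ (i : Fin n) (j : Fin (l i + 1)),
      confVand (fun i' => l i' + 1) ξ k (encC (fun i' => l i' + 1) i j) *
        Tmat l a (encC (fun i' => l i' + 1) i j) (encP l i₁ j₁) =
      (((k : ℕ).descFactorial (j : ℕ) : ℂ) * ξ i ^ ((k : ℕ) - (j : ℕ))) *
        (if i = i₁ then tentry l a i (j : ℕ) (j₁ : ℕ) else 0) := by
    intro i j
    rw [confVand_apply, show encC (fun i' => l i' + 1) i j = encP l i j from rfl, Tmat_apply]
  simp only [hterm]
  rw [Finset.sum_eq_single i₁]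
  · simp only [if_pos rfl, if_true]
    by_cases hc : (j₁ : ℕ) = l i₁
    · -- node column
      have hj₁ : j₁ = Fin.last (l i₁) := Fin.ext (by simpa using hc)
      subst hj₁
      rw [pronyJacobian_node]
      rw [Fin.sum_univ_succ]
      have h0 : tentry l a i₁ ((0 : Fin (l i₁ + 1)) : ℕ) ((Fin.last (l i₁) : Fin (l i₁ + 1)) : ℕ)
          = 0 := by
        unfold tentry
        simp
      rw [h0, mul_zero, zero_add]
      apply Finset.sum_congr rfl
      intro j _
      have ht : tentry l a i₁ ((Fin.succ j : Fin (l i₁ + 1)) : ℕ)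
          ((Fin.last (l i₁) : Fin (l i₁ + 1)) : ℕ) = a i₁ j := by
        unfold tentry aN
        simp
      rw [ht, pronyParam_mag, pronyParam_node]
      simp only [Fin.val_succ]
      ring
    · -- magnitude column
      have hlt : (j₁ : ℕ) < l i₁ := by have := j₁.isLt; omega
      have hj₁ : j₁ = Fin.castSucc (⟨(j₁ : ℕ), hlt⟩ : Fin (l i₁)) := Fin.ext rfl
      rw [hj₁, pronyJacobian_mag, pronyParam_node]
      rw [Finset.sum_eq_single j₁]
      · have ht : tentry l a i₁ (j₁ : ℕ) ((Fin.castSucc (⟨(j₁ : ℕ), hlt⟩ : Fin (l i₁))) : ℕ)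
            = 1 := by
          unfold tentry
          simp only [Fin.coe_castSucc]
          rw [if_neg (by omega : ¬ (j₁ : ℕ) = l i₁)]
          simp
        rw [ht, mul_one]
      · intro j _ hne
        have ht : tentry l a i₁ (j : ℕ) ((Fin.castSucc (⟨(j₁ : ℕ), hlt⟩ : Fin (l i₁))) : ℕ)
            = 0 := by
          unfold tentry
          simp only [Fin.coe_castSucc]
          rw [if_neg (by omega : ¬ (j₁ : ℕ) = l i₁),
            if_neg (fun h => hne (Fin.ext (by simpa using h)))]
        rw [ht, mul_zero]
      · simp
  · intro i _ hne
    simp [hne]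
  · simp

lemma smat_mulVec {n : ℕ} (l : Fin n → ℕ) (a : (i : Fin n) → Fin (l i) → ℂ)
    (i : Fin n) (j : ℕ) (hj1 : 1 ≤ j) (hjlt : j < l i)
    (w : Fin (∑ i', (l i' + 1)) → ℂ) (hp : j < l i + 1) :
    (Smat l a).mulVec w (encP l i ⟨j, hp⟩) =
      w (encP l i ⟨j, hp⟩) -
        aN l a i (j - 1) * (aN l a i (l i - 1))⁻¹ * w (encP l i (Fin.last (l i))) := by
  set jF : Fin (l i + 1) := ⟨j, hp⟩ with hjF
  have hmv : (Smat l a).mulVec w (encP l i jF) =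
      ∑ q, Smat l a (encP l i jF) q * w q := rfl
  rw [hmv, sum_fin_blocks (L := fun i' => l i' + 1)
    (fun q => Smat l a (encP l i jF) q * w q)]
  have hterm : ∀ (i' : Fin n) (j' : Fin (l i' + 1)),
      Smat l a (encP l i jF) (encC (fun i'' => l i'' + 1) i' j') *
        w (encC (fun i'' => l i'' + 1) i' j') =
      (if i = i' then sentry l a i (jF : ℕ) (j' : ℕ) else 0) * w (encP l i' j') := by
    intro i' j'
    rw [show encC (fun i'' => l i'' + 1) i' j' = encP l i' j' from rfl, Smat_apply]
  simp only [hterm]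
  rw [Finset.sum_eq_single i]
  · simp only [if_pos rfl, if_true]
    have hne : jF ≠ Fin.last (l i) := by
      intro h
      have := congrArg Fin.val h
      simp [hjF] at this
      omega
    have hzero : ∀ j' : Fin (l i + 1), j' ∈ Finset.univ →
        j' ∉ ({jF, Fin.last (l i)} : Finset (Fin (l i + 1))) →
        sentry l a i (jF : ℕ) (j' : ℕ) * w (encP l i j') = 0 := by
      intro j' _ hmem
      simp only [Finset.mem_insert, Finset.mem_singleton, not_or] at hmem
      have h1 : (j' : ℕ) ≠ l i := fun h => hmem.2 (Fin.ext (by simp [h]))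
      have h2 : (jF : ℕ) ≠ (j' : ℕ) := fun h => hmem.1 (Fin.ext h.symm)
      unfold sentry
      rw [if_neg h1, if_neg h2, zero_mul]
    rw [← Finset.sum_subset (Finset.subset_univ ({jF, Fin.last (l i)} : Finset (Fin (l i + 1))))
        hzero, Finset.sum_pair hne]
    have hv1 : sentry l a i (jF : ℕ) (jF : ℕ) = 1 := by
      unfold sentry
      rw [if_neg (by simp [hjF]; omega), if_pos rfl]
    have hv2 : sentry l a i (jF : ℕ) ((Fin.last (l i) : Fin (l i + 1)) : ℕ) =
        -(aN l a i (j - 1)) * (aN l a i (l i - 1))⁻¹ := by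
      unfold sentry
      simp only [Fin.val_last]
      rw [if_pos trivial, if_neg (by omega : ¬ j = l i), if_pos hj1]
    rw [hv1, hv2, one_mul]
    ring
  · intro i' _ hne
    simp [Ne.symm hne]
  · simp
/-- let `C₁ = ‖U(ξ_1,l_1+1,…,ξ_n,l_n+1)⁻¹‖_∞` (maximal row sum of absolute
values).  If the nodes are pairwise distinct and the highest magnitudes are nonzero, then
for every `ε > 0`, every `v` with `|v_k| ≤ ε` and every `1 ≤ j ≤ l_i−1`, the component of
`J_P(x)⁻¹ v` corresponding to the magnitude `a_{i,j}` has absolute value at most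
`C₁ ε (1 + |a_{i,j−1}|/|a_{i,l_i−1}|)`. -/
theorem pronyJacobian_inv_magnitude_component_bound
    (n : ℕ) (hn : 1 ≤ n) (l : Fin n → ℕ) (hl : ∀ i, 1 ≤ l i)
    (ξ : Fin n → ℂ) (a : (i : Fin n) → Fin (l i) → ℂ)
    (hdist : ∀ i j : Fin n, i ≠ j → ξ i ≠ ξ j)
    (hhigh : ∀ i, a i ⟨l i - 1, by have := hl i; omega⟩ ≠ 0)
    (C₁ : ℝ)
    (hC₁ : C₁ = ⨆ r, ∑ c, ‖((confVand (fun i => l i + 1) ξ)⁻¹) r c‖)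
    (ε : ℝ) (hε : 0 < ε) (v : Fin (∑ i', (l i' + 1)) → ℂ)
    (hv : ∀ k, ‖v k‖ ≤ ε) :
    ∀ (i : Fin n) (j : ℕ) (hj1 : 1 ≤ j) (hj2 : j ≤ l i - 1),
      ‖Matrix.mulVec (pronyJacobian l (pronyParam l ξ a))⁻¹ v
            (encP l i ⟨j, by have := hl i; omega⟩)‖ ≤
        C₁ * ε *
          (1 + ‖a i ⟨j - 1, by have := hl i; omega⟩‖ /
            ‖a i ⟨l i - 1, by have := hl i; omega⟩‖) := by
  intro i j hj1 hj2
  have hli := hl i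
  have haN : ∀ i', aN l a i' (l i' - 1) ≠ 0 := by
    intro i'
    unfold aN
    rw [dif_pos (by have := hl i'; omega : l i' - 1 < l i')]
    exact hhigh i'
  have hfac := jacobian_factor l ξ a
  set U := confVand (fun i' => l i' + 1) ξ with hU
  set J := pronyJacobian l (pronyParam l ξ a) with hJ
  have hpos : 0 < ∑ i', (l i' + 1) :=
    Finset.sum_pos (fun _ _ => Nat.succ_pos _) ⟨i, Finset.mem_univ i⟩
  by_cases hdet : IsUnit U.det
  · -- invertible confluent Vandermonde
    have hrow : ∀ r, ∑ c, ‖(U⁻¹) r c‖ ≤ C₁ := by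
      intro r
      rw [hC₁]
      exact le_ciSup (f := fun r => ∑ c, ‖(confVand (fun i => l i + 1) ξ)⁻¹ r c‖)
        (Set.Finite.bddAbove (Set.finite_range _)) r
    have hC₁0 : 0 ≤ C₁ := by
      refine le_trans ?_ (hrow ⟨0, hpos⟩)
      positivity
    have hUinv : U * U⁻¹ = 1 := Matrix.mul_nonsing_inv U hdet
    have hTS := Tmat_mul_Smat l a hl haN
    have hJinv : J⁻¹ = Smat l a * U⁻¹ := by
      apply Matrix.inv_eq_right_inv
      rw [hfac, Matrix.mul_assoc, ← Matrix.mul_assoc (Tmat l a), hTS, Matrix.one_mul, hUinv]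
    rw [hJinv, ← Matrix.mulVec_mulVec]
    set w := U⁻¹.mulVec v with hw
    have hwb : ∀ r, ‖w r‖ ≤ C₁ * ε := by
      intro r
      have h1 : ‖w r‖ ≤ ∑ c, ‖(U⁻¹) r c * v c‖ :=
        norm_sum_le (E := ℂ) Finset.univ (fun c => (U⁻¹) r c * v c)
      have h2 : ∑ c, ‖(U⁻¹) r c * v c‖ ≤ ∑ c, ‖(U⁻¹) r c‖ * ε := by
        apply Finset.sum_le_sum
        intro c _
        rw [norm_mul]
        exact mul_le_mul_of_nonneg_left (hv c) (norm_nonneg _)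
      have h3 : ∑ c, ‖(U⁻¹) r c‖ * ε ≤ C₁ * ε := by
        rw [← Finset.sum_mul]
        exact mul_le_mul_of_nonneg_right (hrow r) hε.le
      exact h1.trans (h2.trans h3)
    rw [smat_mulVec l a i j hj1 (by omega) w (by omega)]
    have hA : aN l a i (j - 1) = a i ⟨j - 1, by omega⟩ := by
      unfold aN
      rw [dif_pos (by omega : j - 1 < l i)]
    have hB : aN l a i (l i - 1) = a i ⟨l i - 1, by omega⟩ := by
      unfold aN
      rw [dif_pos (by omega : l i - 1 < l i)]
    set A := ‖a i ⟨j - 1, by omega⟩‖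
    set B := ‖a i ⟨l i - 1, by omega⟩‖
    have hBpos : 0 < B := norm_pos_iff.mpr (hhigh i)
    have htri : ‖w (encP l i ⟨j, by omega⟩) -
        aN l a i (j - 1) * (aN l a i (l i - 1))⁻¹ * w (encP l i (Fin.last (l i)))‖ ≤
        ‖w (encP l i ⟨j, by omega⟩)‖ +
          ‖aN l a i (j - 1) * (aN l a i (l i - 1))⁻¹ *
            w (encP l i (Fin.last (l i)))‖ := norm_sub_le _ _
    refine htri.trans ?_
    have habs : ‖aN l a i (j - 1) * (aN l a i (l i - 1))⁻¹ *
        w (encP l i (Fin.last (l i)))‖ =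
        A * B⁻¹ * ‖w (encP l i (Fin.last (l i)))‖ := by
      rw [norm_mul, norm_mul, norm_inv, hA, hB]
    rw [habs]
    have h4 : A * B⁻¹ * ‖w (encP l i (Fin.last (l i)))‖ ≤ A * B⁻¹ * (C₁ * ε) :=
      mul_le_mul_of_nonneg_left (hwb _) (by positivity)
    have h5 := hwb (encP l i ⟨j, by omega⟩)
    have : C₁ * ε * (1 + A / B) = C₁ * ε + A * B⁻¹ * (C₁ * ε) := by
      field_simp
    rw [this]
    exact add_le_add h5 h4
  · -- singular case: everything degenerates to 0 ≤ 0
    have hNE : Nonempty (Fin (∑ i', (l i' + 1))) := ⟨⟨0, hpos⟩⟩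
    have hUzero : U⁻¹ = 0 := Matrix.nonsing_inv_apply_not_isUnit U hdet
    have hC0 : C₁ = 0 := by
      rw [hC₁, hUzero]
      simp
    have hJdet : ¬ IsUnit J.det := by
      rw [hfac, Matrix.det_mul]
      intro h
      exact hdet (isUnit_of_mul_isUnit_left h)
    rw [Matrix.nonsing_inv_apply_not_isUnit _ hJdet, Matrix.zero_mulVec, hC0]
    simp
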